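/- Let G be a simplicial clique covered graph (SCCG) with connection set W, and let I_m ⊆ W be an independent set of G. Then I_m is a maximal independent set of G if and only if S(I_m) = ∅, i.e., if and only if every simplicial clique of G is contained in the closed neighborhood N[I_m]. -/

import Mathlib

open Finset

open scoped Classical

/-- The closed neighborhood `N[v]` of a vertex `v`: `v` together with its neighbors. -/
noncomputable def clNbhd {V : Type*} [Fintype V] (G : SimpleGraph V) (v : V) : Finset V :=
  univ.filter (fun u => u = v ∨ G.Adj v u)

/-- The closed neighborhood `N[s]` of a finite set `s` of vertices. -/
noncomputable def clNbhdSet {V : Type*} [Fintype V] (G : SimpleGraph V) (s : Finset V) : Finset V :=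
  s.biUnion (clNbhd G)

/-- A maximal clique of a graph: a clique not properly contained in any other clique. -/
def IsMaxClique {V : Type*} (G : SimpleGraph V) (C : Finset V) : Prop :=
  G.IsClique (C : Set V) ∧ ∀ D : Finset V, G.IsClique (D : Set V) → C ⊆ D → D = C

/-- A vertex is simplicial if its closed neighborhood is a maximal clique. -/
def IsSimplicialVertex {V : Type*} [Fintype V] (G : SimpleGraph V) (v : V) : Prop :=
  IsMaxClique G (clNbhd G v)

/-- A simplicial clique: a maximal clique containing at least one simplicial vertex. -/
def IsSimplicialClique {V : Type*} [Fintype V] (G : SimpleGraph V) (C : Finset V) : Prop :=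
  IsMaxClique G C ∧ ∃ v ∈ C, IsSimplicialVertex G v

/-- The set `C(G)` of simplicial cliques of `G`. -/
noncomputable def simpCliques {V : Type*} [Fintype V] (G : SimpleGraph V) : Finset (Finset V) :=
  univ.filter (fun C => IsSimplicialClique G C)

/-- The simplicial clique number `sc(G) = |C(G)|`. -/
noncomputable def scNum {V : Type*} [Fintype V] (G : SimpleGraph V) : ℕ :=
  (simpCliques G).card

/-- A simplicial clique covered graph (SCCG): `C(G)` is nonempty and the union of the
simplicial cliques is the whole vertex set. -/
def IsSCCG {V : Type*} [Fintype V] (G : SimpleGraph V) : Prop :=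
  (simpCliques G).Nonempty ∧ ∀ v : V, ∃ C ∈ simpCliques G, v ∈ C

/-- The connection set `W` of `G`: vertices belonging to at least two simplicial cliques. -/
noncomputable def connSet {V : Type*} [Fintype V] (G : SimpleGraph V) : Finset V :=
  univ.filter (fun v => 1 < ((simpCliques G).filter (fun C => v ∈ C)).card)

/-- `S(I)`: the set of simplicial cliques not contained in the closed neighborhood `N[I]`. -/
noncomputable def sFam {V : Type*} [Fintype V] (G : SimpleGraph V) (I : Finset V) :
    Finset (Finset V) :=
  (simpCliques G).filter (fun C => ¬ C ⊆ clNbhdSet G I)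

/-- An independent set of vertices: no two of its vertices are adjacent. -/
def IsIndep {V : Type*} (G : SimpleGraph V) (s : Finset V) : Prop :=
  ∀ u ∈ s, ∀ w ∈ s, ¬ G.Adj u w

/-- A maximal independent set: an independent set not properly contained in any
other independent set. -/
def IsMaxIndep {V : Type*} (G : SimpleGraph V) (s : Finset V) : Prop :=
  IsIndep G s ∧ ∀ t : Finset V, IsIndep G t → s ⊆ t → t = s

/-- A well-covered weighting: a weighting whose sum over every maximal independent set
is the same. -/
def IsWCW {V : Type*} (G : SimpleGraph V) {F : Type*} [Field F] (f : V → F) : Prop :=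
  ∀ s t : Finset V, IsMaxIndep G s → IsMaxIndep G t →
    ∑ v ∈ s, f v = ∑ v ∈ t, f v

/-- The well-covered space of `G` over `F`: the `F`-vector space of well-covered
weightings of `G`. -/
noncomputable def wcSpace {V : Type*} (G : SimpleGraph V) (F : Type*) [Field F] :
    Submodule F (V → F) where
  carrier := {f | IsWCW G f}
  zero_mem' := by
    intro s t _ _
    simp
  add_mem' := by
    intro f g hf hg
    simp only [Set.mem_setOf_eq] at hf hg ⊢
    intro s t hs ht
    simp only [Pi.add_apply, Finset.sum_add_distrib]
    rw [hf s t hs ht, hg s t hs ht]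
  smul_mem' := by
    intro c f hf
    simp only [Set.mem_setOf_eq] at hf ⊢
    intro s t hs ht
    simp only [Pi.smul_apply, smul_eq_mul, ← Finset.mul_sum]
    rw [hf s t hs ht]

/-- The well-covered dimension `wcdim(G, F)`. -/
noncomputable def wcdim {V : Type*} (G : SimpleGraph V) (F : Type*) [Field F] : ℕ :=
  Module.finrank F (wcSpace G F)

/-- For a SCCG `G` and an independent subset `I` of the connection set
`W`, `I` is a maximal independent set of `G` iff `S(I) = ∅`, i.e. iff every simplicial
clique of `G` is contained in the closed neighborhood `N[I]`. -/
theorem sccg_indep_mis_iff {V : Type*} [Fintype V] (G : SimpleGraph V)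
    (hconn : G.Connected) (hG : IsSCCG G) (I : Finset V) (hIW : I ⊆ connSet G)
    (hI : IsIndep G I) :
    (IsMaxIndep G I ↔ sFam G I = ∅) ∧
    (IsMaxIndep G I ↔ ∀ C ∈ simpCliques G, C ⊆ clNbhdSet G I) := by
  have hmemN : ∀ w : V, w ∈ clNbhdSet G I ↔ ∃ u ∈ I, w = u ∨ G.Adj u w := by
    intro w
    simp [clNbhdSet, clNbhd]
  have key : IsMaxIndep G I ↔ ∀ C ∈ simpCliques G, C ⊆ clNbhdSet G I := by
    constructor
    · intro hmax C hC w hw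
      by_contra hwN
      rw [hmemN] at hwN
      push_neg at hwN
      have hwI : w ∉ I := fun h => (hwN w h).1 rfl
      have hind : IsIndep G (insert w I) := by
        intro a ha b hb hab
        rcases Finset.mem_insert.1 ha with ha' | ha'
        · rcases Finset.mem_insert.1 hb with hb' | hb'
          · rw [ha', hb'] at hab; exact G.loopless.irrefl w hab
          · rw [ha'] at hab; exact (hwN b hb').2 hab.symm
        · rcases Finset.mem_insert.1 hb with hb' | hb'
          · rw [hb'] at hab; exact (hwN a ha').2 hab
          · exact hI a ha' b hb' hab
      have := hmax.2 (insert w I) hind (Finset.subset_insert _ _)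
      exact hwI (this ▸ Finset.mem_insert_self w I)
    · intro hall
      refine ⟨hI, fun t ht hsub => ?_⟩
      by_contra hne
      obtain ⟨w, hwt, hwI⟩ : ∃ w ∈ t, w ∉ I := by
        by_contra h
        push_neg at h
        exact hne (Finset.Subset.antisymm h hsub)
      obtain ⟨C, hC, hwC⟩ := hG.2 w
      have := (hmemN w).1 (hall C hC hwC)
      obtain ⟨u, huI, hu⟩ := this
      rcases hu with rfl | hadj
      · exact hwI huI
      · exact ht u (hsub huI) w hwt hadj
  refine ⟨?_, key⟩
  rw [key]
  unfold sFam
  rw [Finset.filter_eq_empty_iff]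
  simp
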